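/- Let θ = (k_r) be a lacunary sequence with liminf_r q_r > 1, where q_r = k_r / k_{r−1}. Then AC_{σ₁} ⊆ AC_θ: every sequence (x_m) for which there exists an integer n with (1/t) Σ_{m=1}^{t} |x_m − x_{⟨m,n⟩}| → 0 also satisfies (1/h_r) Σ_{m ∈ I_r} |x_m − x_{⟨m,n⟩}| → 0. -/
import Mathlib


open Filter Finset

/-- Membership in the lacunary arithmetic convergence space `AC_θ`,
with lacunary sequence given by `k` (blocks `I_r = (k r, k (r+1)]`,
`h_r = k (r+1) - k r`) and witness integer `n`. -/
def ACtheta (k : ℕ → ℕ) (n : ℕ) (x : ℕ → ℝ) : Prop :=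
  Tendsto (fun r => (1 / ((k (r + 1) - k r : ℕ) : ℝ)) *
    ∑ m ∈ Finset.Ioc (k r) (k (r + 1)), |x m - x (Nat.gcd m n)|) atTop (nhds 0)

/-- Membership in the strongly Cesàro arithmetic convergence space `AC_{σ₁}`
with witness integer `n`. -/
def ACsigma (n : ℕ) (x : ℕ → ℝ) : Prop :=
  Tendsto (fun t : ℕ => (1 / (t : ℝ)) *
    ∑ m ∈ Finset.Icc 1 t, |x m - x (Nat.gcd m n)|) atTop (nhds 0)

/-- if `liminf q_r > 1` then `AC_{σ₁} ⊆ AC_θ`. -/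
theorem ACsigma_subset_ACtheta (k : ℕ → ℕ) (hk : StrictMono k)
    (hkpos : ∀ r, 0 < k r)
    (hh : Tendsto (fun r => (k (r + 1) - k r : ℕ)) atTop atTop)
    (hq : 1 < Filter.liminf (fun r => ((k (r + 1) : ℝ) / (k r : ℝ))) atTop)
    (n : ℕ) (x : ℕ → ℝ) (hx : ACsigma n x) :
    ACtheta k n x := by
  set S : ℕ → ℝ := fun t => ∑ m ∈ Finset.Ioc 0 t, |x m - x (Nat.gcd m n)| with hS
  have hSnonneg : ∀ t, 0 ≤ S t := fun t => Finset.sum_nonneg fun m _ => abs_nonneg _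
  -- reformulate hypothesis
  have hA : Tendsto (fun t : ℕ => S t / t) atTop (nhds 0) := by
    have heq : ∀ t : ℕ, (1 / (t : ℝ)) * ∑ m ∈ Finset.Icc 1 t, |x m - x (Nat.gcd m n)|
        = S t / t := by
      intro t
      rw [hS]
      rw [show Finset.Icc 1 t = Finset.Ioc 0 t from rfl]
      ring
    exact (tendsto_congr heq).mp hx
  set L := Filter.liminf (fun r => ((k (r + 1) : ℝ) / (k r : ℝ))) atTop with hL
  set c : ℝ := (1 + L) / 2 with hc
  have hc1 : 1 < c := by rw [hc]; linarith
  have hcL : c < L := by rw [hc]; linarith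
  have hev : ∀ᶠ r in atTop, c < (k (r + 1) : ℝ) / (k r : ℝ) := by
    have hLs : L = sSup {a : ℝ | ∀ᶠ r in atTop, a ≤ (k (r + 1) : ℝ) / (k r : ℝ)} := by
      rw [hL, Filter.liminf_eq]
    set E : Set ℝ := {a : ℝ | ∀ᶠ r in atTop, a ≤ (k (r + 1) : ℝ) / (k r : ℝ)} with hE
    have hEne : E.Nonempty := by
      by_contra h
      rw [Set.not_nonempty_iff_eq_empty] at h
      rw [hLs, h, Real.sSup_empty] at hcL
      linarith
    obtain ⟨a, haE, hca⟩ := exists_lt_of_lt_csSup hEne (by rw [← hLs]; exact hcL)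
    exact haE.mono fun r h => lt_of_lt_of_le hca h
  have hktop : Tendsto k atTop atTop := hk.tendsto_atTop
  have hA1 : Tendsto (fun r => S (k (r + 1)) / (k (r + 1))) atTop (nhds 0) :=
    hA.comp (hktop.comp (tendsto_add_atTop_nat 1))
  have hg : Tendsto (fun r => (c / (c - 1)) * (S (k (r + 1)) / (k (r + 1)))) atTop (nhds 0) := by
    simpa using hA1.const_mul (c / (c - 1))
  apply squeeze_zero' (g := fun r => (c / (c - 1)) * (S (k (r + 1)) / (k (r + 1)))) ?_ ?_ hg
  · exact Eventually.of_forall fun r =>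
      mul_nonneg (by positivity) (Finset.sum_nonneg fun m _ => abs_nonneg _)
  · filter_upwards [hev] with r hr
    have hkr : (0 : ℝ) < (k r : ℝ) := by exact_mod_cast hkpos r
    have hK : (0 : ℝ) < (k (r + 1) : ℝ) := by exact_mod_cast hkpos (r + 1)
    have hlt : k r < k (r + 1) := hk (lt_add_one r)
    have hcast : ((k (r + 1) - k r : ℕ) : ℝ) = (k (r + 1) : ℝ) - (k r : ℝ) :=
      Nat.cast_sub hlt.le
    have hpos : (0 : ℝ) < ((k (r + 1) - k r : ℕ) : ℝ) := by
      rw [hcast]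
      have : (k r : ℝ) < (k (r + 1) : ℝ) := by exact_mod_cast hlt
      linarith
    have hq' : c * (k r : ℝ) < (k (r + 1) : ℝ) := (lt_div_iff₀ hkr).mp hr
    -- h ≥ K (c-1)/c, i.e. c*h ≥ (c-1)*K
    have hhb : (c - 1) * (k (r + 1) : ℝ) ≤ c * ((k (r + 1) - k r : ℕ) : ℝ) := by
      rw [hcast]; nlinarith
    have hsplit : S (k r) + (∑ m ∈ Finset.Ioc (k r) (k (r + 1)), |x m - x (Nat.gcd m n)|)
        = S (k (r + 1)) :=
      Finset.sum_Ioc_consecutive _ (Nat.zero_le _) hlt.le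
    set T : ℝ := ∑ m ∈ Finset.Ioc (k r) (k (r + 1)), |x m - x (Nat.gcd m n)| with hT
    have hT0 : 0 ≤ T := Finset.sum_nonneg fun m _ => abs_nonneg _
    have hTS : T ≤ S (k (r + 1)) := by
      have := hSnonneg (k r); linarith
    have hSK0 : 0 ≤ S (k (r + 1)) := hSnonneg _
    have hA2 : S (k (r + 1)) = S (k (r + 1)) / (k (r + 1)) * (k (r + 1)) := by
      field_simp
    set a : ℝ := S (k (r + 1)) / (k (r + 1)) with ha
    have ha0 : 0 ≤ a := div_nonneg hSK0 hK.le
    have hTS' : T ≤ a * (k (r + 1) : ℝ) := hA2 ▸ hTS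
    rw [one_div, inv_mul_eq_div, div_le_iff₀ hpos, div_mul_eq_mul_div, div_mul_eq_mul_div,
      le_div_iff₀ (by linarith : (0:ℝ) < c - 1)]
    nlinarith [mul_le_mul_of_nonneg_left hhb ha0,
      mul_le_mul_of_nonneg_right hTS' (by linarith : (0:ℝ) ≤ c - 1)]
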